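/- For all m, n ≥ 1 and k ≥ 0, the graded component U_{m,n}^(k) splits into the cartesian product U_{m,n}^(k) = L_m^(k) × R_n^(k). -/

import Mathlib

open Finset

/-- `Π·h`: the vector whose `q`-th entry is the union of the `Π p` over all `p` with `h p = q`. -/
def dotAct {n : ℕ} (Pi : Fin n → Finset ℕ) (h : Fin n → Fin n) : Fin n → Finset ℕ :=
  fun q => (Finset.univ.filter (fun p => h p = q)).biUnion Pi

/-- Entrywise union of two vectors of sets. -/
def vUnion {n : ℕ} (Pi Pi' : Fin n → Finset ℕ) : Fin n → Finset ℕ :=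
  fun q => Pi q ∪ Pi' q

/-- `r = max (π₀ ∪ … ∪ π_{n−1})`. -/
def vMax {n : ℕ} (Pi : Fin n → Finset ℕ) : ℕ :=
  (Finset.univ.sup Pi).sup id

/-- `Π↑`: add `r = max (π₀ ∪ … ∪ π_{n−1})` to every element of every entry. -/
def vUp {n : ℕ} (Pi : Fin n → Finset ℕ) : Fin n → Finset ℕ :=
  fun q => (Pi q).image (· + vMax Pi)

/-- A `k`-EXPcomposition of size `n`: pairwise disjoint entries whose union is `{1,…,2^k}`. -/
def IsEXP {n : ℕ} (k : ℕ) (Pi : Fin n → Finset ℕ) : Prop :=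
  (∀ p q : Fin n, p ≠ q → Disjoint (Pi p) (Pi q)) ∧
    Finset.univ.sup Pi = Finset.Icc 1 (2 ^ k)

/-- A `k`-Rvalid vector of size `n`. -/
def IsRvalid {n : ℕ} (k : ℕ) (ρ : Fin n → Finset ℕ) : Prop :=
  IsEXP k ρ ∧ (∀ p : Fin n, p.val = 0 → 1 ∈ ρ p) ∧
    ∀ k' < k, ∀ i ∈ Finset.Icc 1 (2 ^ k'), ∀ j ∈ Finset.Icc 1 (2 ^ k'),
      (∃ α, i ∈ ρ α ∧ j ∈ ρ α) → ∃ β, i + 2 ^ k' ∈ ρ β ∧ j + 2 ^ k' ∈ ρ β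

/-- A `k`-Lvalid vector of size `m`. -/
def IsLvalid {m : ℕ} (k : ℕ) (lam : Fin m → Finset ℕ) : Prop :=
  IsEXP k lam ∧ (∀ p : Fin m, p.val = 0 → 2 ^ k ∈ lam p) ∧
    ∀ k' < k, ∀ i ∈ Finset.Icc 1 (2 ^ k'), ∀ j ∈ Finset.Icc 1 (2 ^ k'),
      (∃ α, 2 ^ k + 1 - i ∈ lam α ∧ 2 ^ k + 1 - j ∈ lam α) →
        ∃ β, 2 ^ k + 1 - (i + 2 ^ k') ∈ lam β ∧ 2 ^ k + 1 - (j + 2 ^ k') ∈ lam β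

/-- Number of nonempty entries of a vector of sets. -/
def nne {n : ℕ} (Pi : Fin n → Finset ℕ) : ℕ :=
  (Finset.univ.filter (fun q => Pi q ≠ ∅)).card

/-- `succ(P) = {P ∪ (P·g)↑ : g}`. -/
def succSet {n : ℕ} (P : Fin n → Finset ℕ) : Finset (Fin n → Finset ℕ) :=
  (Finset.univ : Finset (Fin n → Fin n)).image (fun g => vUnion P (vUp (dotAct P g)))

/-- The graded set `U_{m,n}^{(k)}` of U-pairs. -/
def Uset (m n : ℕ) : ℕ → Set ((Fin m → Finset ℕ) × (Fin n → Finset ℕ))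
  | 0 => {x | x = (fun p => if p.val = 0 then {1} else ∅,
                   fun q => if q.val = 0 then {1} else ∅)}
  | k + 1 => {x | ∃ L P, (L, P) ∈ Uset m n k ∧ ∃ (f : Fin m → Fin m) (g : Fin n → Fin n),
      x = (vUnion (dotAct L f) (vUp L), vUnion P (vUp (dotAct P g)))}

/-- The `r`-Stirling number: partitions of `{1,…,a}` into `b` nonempty blocks
with `1,…,r` in pairwise distinct blocks. -/
noncomputable def rStirling (a b r : ℕ) : ℕ :=
  Set.ncard {C : Finset (Finset ℕ) |
    C.card = b ∧ (∅ ∉ C) ∧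
    (∀ B ∈ C, ∀ B' ∈ C, B ≠ B' → Disjoint B B') ∧
    C.sup id = Finset.Icc 1 a ∧
    ∀ x ∈ Finset.Icc 1 r, ∀ y ∈ Finset.Icc 1 r, x ≠ y →
      ∀ B ∈ C, x ∈ B → y ∉ B}

/-- The Stirling number of the second kind: the number of partitions of an
`a`-element set into `b` nonempty blocks. -/
noncomputable def stirling2 (a b : ℕ) : ℕ := rStirling a b 0

/-- The entry `s_n^{(i,j)}` (with `1 ≤ i,j ≤ n`). -/
noncomputable def sEntry (n i j : ℕ) : ℕ :=
  if i ≤ j then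
    (j - i).factorial * Nat.choose (n - i) (j - i) *
      ∑ α ∈ Finset.Icc (j - i) i, Nat.choose i α * i ^ (i - α) * stirling2 α (j - i)
  else 0

/-- The matrix `S_n`, with rows and columns indexed by `{1,…,n}`. -/
noncomputable def Smat (n : ℕ) : Matrix (Fin n) (Fin n) ℕ :=
  fun i j => sEntry n (i.val + 1) (j.val + 1)

/-- One step of the shuffle-automaton action on subsets of the grid. -/
def stepE {m n : ℕ} (E : Finset (Fin m × Fin n)) (f : Fin m → Fin m) (g : Fin n → Fin n) :
    Finset (Fin m × Fin n) :=
  E.image (fun p => (f p.1, p.2)) ∪ E.image (fun p => (p.1, g p.2))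

/-- Reachability from `{(0,0)}` by finitely many steps. -/
def Reach {m n : ℕ} (hm : 0 < m) (hn : 0 < n) (E : Finset (Fin m × Fin n)) : Prop :=
  Relation.ReflTransGen (fun E1 E2 => ∃ f g, E2 = stepE E1 f g)
    {(⟨0, hm⟩, ⟨0, hn⟩)} E

/-- Reachability from `{(0,0)}` in at most `t` steps. -/
def ReachIn {m n : ℕ} (hm : 0 < m) (hn : 0 < n) :
    ℕ → Finset (Fin m × Fin n) → Prop
  | 0, E => E = {(⟨0, hm⟩, ⟨0, hn⟩)}
  | t + 1, E => ReachIn hm hn t E ∨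
      ∃ E' f g, ReachIn hm hn t E' ∧ E = stepE E' f g

/-- `s(Λ,P) = {(i,j) : λ_i ∩ ρ_j ≠ ∅}`. -/
def sTab {m n : ℕ} (L : Fin m → Finset ℕ) (P : Fin n → Finset ℕ) :
    Finset (Fin m × Fin n) :=
  Finset.univ.filter (fun p => (L p.1 ∩ P p.2).Nonempty)

section auxlemmas

variable {n : ℕ}

lemma mem_supUniv (P : Fin n → Finset ℕ) (x : ℕ) :
    x ∈ Finset.univ.sup P ↔ ∃ p, x ∈ P p := by
  simp [Finset.mem_sup]

lemma mem_dotAct (P : Fin n → Finset ℕ) (g : Fin n → Fin n) (q : Fin n) (x : ℕ) :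
    x ∈ dotAct P g q ↔ ∃ p, g p = q ∧ x ∈ P p := by
  simp only [dotAct, Finset.mem_biUnion, Finset.mem_filter, Finset.mem_univ, true_and]

lemma sup_dotAct (P : Fin n → Finset ℕ) (g : Fin n → Fin n) :
    Finset.univ.sup (dotAct P g) = Finset.univ.sup P := by
  ext x
  simp only [mem_supUniv, mem_dotAct]
  constructor
  · rintro ⟨q, p, -, hx⟩; exact ⟨p, hx⟩
  · rintro ⟨p, hx⟩; exact ⟨g p, p, rfl, hx⟩

lemma vMax_eq {k : ℕ} (P : Fin n → Finset ℕ)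
    (h : Finset.univ.sup P = Finset.Icc 1 (2 ^ k)) : vMax P = 2 ^ k := by
  rw [vMax, h]
  apply le_antisymm
  · exact Finset.sup_le fun x hx => (Finset.mem_Icc.mp hx).2
  · exact Finset.le_sup (f := id) (Finset.mem_Icc.mpr ⟨Nat.one_le_two_pow, le_rfl⟩)

lemma mem_bound {k : ℕ} {P : Fin n → Finset ℕ}
    (h : Finset.univ.sup P = Finset.Icc 1 (2 ^ k))
    {p : Fin n} {x : ℕ} (hx : x ∈ P p) : 1 ≤ x ∧ x ≤ 2 ^ k := by
  have hm : x ∈ Finset.univ.sup P := (mem_supUniv P x).mpr ⟨p, hx⟩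
  rw [h, Finset.mem_Icc] at hm
  exact hm

lemma mem_Rstep {k : ℕ} (P : Fin n → Finset ℕ) (g : Fin n → Fin n)
    (hsup : Finset.univ.sup P = Finset.Icc 1 (2 ^ k)) (q : Fin n) (x : ℕ) :
    x ∈ vUnion P (vUp (dotAct P g)) q ↔
      x ∈ P q ∨ ∃ i, i ∈ dotAct P g q ∧ x = i + 2 ^ k := by
  have hv : vMax (dotAct P g) = 2 ^ k := vMax_eq _ ((sup_dotAct P g).trans hsup)
  simp only [vUnion, vUp, hv, Finset.mem_union, Finset.mem_image]
  constructor
  · rintro (h | ⟨i, hi, rfl⟩)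
    exacts [Or.inl h, Or.inr ⟨i, hi, rfl⟩]
  · rintro (h | ⟨i, hi, rfl⟩)
    exacts [Or.inl h, Or.inr ⟨i, hi, rfl⟩]

lemma mem_Lstep {k : ℕ} (L : Fin n → Finset ℕ) (f : Fin n → Fin n)
    (hsup : Finset.univ.sup L = Finset.Icc 1 (2 ^ k)) (q : Fin n) (x : ℕ) :
    x ∈ vUnion (dotAct L f) (vUp L) q ↔
      x ∈ dotAct L f q ∨ ∃ i, i ∈ L q ∧ x = i + 2 ^ k := by
  have hv : vMax L = 2 ^ k := vMax_eq _ hsup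
  simp only [vUnion, vUp, hv, Finset.mem_union, Finset.mem_image]
  constructor
  · rintro (h | ⟨i, hi, rfl⟩)
    exacts [Or.inl h, Or.inr ⟨i, hi, rfl⟩]
  · rintro (h | ⟨i, hi, rfl⟩)
    exacts [Or.inl h, Or.inr ⟨i, hi, rfl⟩]

end auxlemmas

section mainlemmas

variable {n : ℕ}

lemma block_uniq {P : Fin n → Finset ℕ}
    (hdisj : ∀ p q : Fin n, p ≠ q → Disjoint (P p) (P q))
    {x : ℕ} {p q : Fin n} (h1 : x ∈ P p) (h2 : x ∈ P q) : p = q := by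
  by_contra hne
  exact (Finset.disjoint_left.mp (hdisj p q hne) h1) h2

lemma R_sound {k : ℕ} {P : Fin n → Finset ℕ} (g : Fin n → Fin n)
    (hP : IsRvalid k P) : IsRvalid (k + 1) (vUnion P (vUp (dotAct P g))) := by
  obtain ⟨⟨hdisj, hsup⟩, hone, hcoh⟩ := hP
  have hM := mem_Rstep P g hsup
  have hb : ∀ {p x}, x ∈ P p → 1 ≤ x ∧ x ≤ 2 ^ k := fun h => mem_bound hsup h
  have hdsup : Finset.univ.sup (dotAct P g) = Finset.Icc 1 (2 ^ k) :=
    (sup_dotAct P g).trans hsup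
  have h2 : 2 ^ (k + 1) = 2 ^ k + 2 ^ k := by rw [pow_succ]; ring
  refine ⟨⟨?_, ?_⟩, ?_, ?_⟩
  · intro p q hpq
    rw [Finset.disjoint_left]
    intro x hx hx'
    rw [hM] at hx hx'
    rcases hx with h1 | ⟨i, hi, rfl⟩
    · rcases hx' with h1' | ⟨i, hi, hxeq⟩
      · exact hpq (block_uniq hdisj h1 h1')
      · have hb1 := hb h1
        have hb2 := mem_bound hdsup hi
        omega
    · rcases hx' with h1' | ⟨j, hj, hje⟩
      · have hb1 := hb h1'
        have hb2 := mem_bound hdsup hi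
        omega
      · have hij : i = j := by omega
        subst hij
        rw [mem_dotAct] at hi hj
        obtain ⟨a, rfl, ha⟩ := hi
        obtain ⟨a', ha'q, ha'⟩ := hj
        exact hpq (by rw [← ha'q, block_uniq hdisj ha ha'])
  · ext x
    rw [mem_supUniv, Finset.mem_Icc]
    simp only [hM]
    constructor
    · rintro ⟨q, h | ⟨i, hi, rfl⟩⟩
      · have := hb h; omega
      · have := mem_bound hdsup hi; omega
    · intro hx
      by_cases hle : x ≤ 2 ^ k
      · have hxm : x ∈ Finset.univ.sup P := by rw [hsup, Finset.mem_Icc]; omega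
        obtain ⟨p, hp⟩ := (mem_supUniv P x).mp hxm
        exact ⟨p, Or.inl hp⟩
      · have hxm : x - 2 ^ k ∈ Finset.univ.sup P := by rw [hsup, Finset.mem_Icc]; omega
        obtain ⟨p, hp⟩ := (mem_supUniv _ _).mp hxm
        refine ⟨g p, Or.inr ⟨x - 2 ^ k, ?_, by omega⟩⟩
        rw [mem_dotAct]; exact ⟨p, rfl, hp⟩
  · intro p hp
    rw [hM]; exact Or.inl (hone p hp)
  · intro k' hk' i hi j hj h
    obtain ⟨α, hiα, hjα⟩ := h
    rw [Finset.mem_Icc] at hi hj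
    rw [hM] at hiα hjα
    have h1b : 1 ≤ 2 ^ k' := Nat.one_le_two_pow
    have hk'le : k' ≤ k := by omega
    have hpk : 2 ^ k' ≤ 2 ^ k := Nat.pow_le_pow_right (by norm_num) hk'le
    have hiP : i ∈ P α := by
      rcases hiα with h | ⟨z, hz, hze⟩
      · exact h
      · have := mem_bound hdsup hz; omega
    have hjP : j ∈ P α := by
      rcases hjα with h | ⟨z, hz, hze⟩
      · exact h
      · have := mem_bound hdsup hz; omega
    rcases Nat.lt_or_ge k' k with hlt | hge
    · obtain ⟨β, hβ1, hβ2⟩ := hcoh k' hlt i (Finset.mem_Icc.mpr hi) j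
        (Finset.mem_Icc.mpr hj) ⟨α, hiP, hjP⟩
      exact ⟨β, (hM β _).mpr (Or.inl hβ1), (hM β _).mpr (Or.inl hβ2)⟩
    · have hk'eq : k' = k := by omega
      subst hk'eq
      refine ⟨g α, (hM _ _).mpr (Or.inr ⟨i, ?_, rfl⟩), (hM _ _).mpr (Or.inr ⟨j, ?_, rfl⟩)⟩
      · rw [mem_dotAct]; exact ⟨α, rfl, hiP⟩
      · rw [mem_dotAct]; exact ⟨α, rfl, hjP⟩

lemma R_complete {k : ℕ} (hn : 1 ≤ n) {P' : Fin n → Finset ℕ}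
    (hP' : IsRvalid (k + 1) P') :
    ∃ P g, IsRvalid k P ∧ P' = vUnion P (vUp (dotAct P g)) := by
  obtain ⟨⟨hdisj, hsup⟩, hone, hcoh⟩ := hP'
  have hne : Nonempty (Fin n) := ⟨⟨0, hn⟩⟩
  have h2 : 2 ^ (k + 1) = 2 ^ k + 2 ^ k := by rw [pow_succ]; ring
  have hb : ∀ {p x}, x ∈ P' p → 1 ≤ x ∧ x ≤ 2 ^ (k + 1) := fun h => mem_bound hsup h
  set P : Fin n → Finset ℕ := fun q => (P' q).filter (· ≤ 2 ^ k) with hPdef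
  have hmemP : ∀ q x, x ∈ P q ↔ x ∈ P' q ∧ x ≤ 2 ^ k := by
    intro q x; simp [hPdef]
  have hPsup : Finset.univ.sup P = Finset.Icc 1 (2 ^ k) := by
    ext x
    rw [mem_supUniv, Finset.mem_Icc]
    constructor
    · rintro ⟨p, hp⟩
      rw [hmemP] at hp
      have := hb hp.1; omega
    · intro hx
      have hxm : x ∈ Finset.univ.sup P' := by rw [hsup, Finset.mem_Icc]; omega
      obtain ⟨p, hp⟩ := (mem_supUniv _ _).mp hxm
      exact ⟨p, (hmemP _ _).mpr ⟨hp, hx.2⟩⟩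
  have hg : ∀ p : Fin n, ∃ q : Fin n, ∀ i ∈ P p, i + 2 ^ k ∈ P' q := by
    intro p
    rcases (P p).eq_empty_or_nonempty with he | ⟨w, hw⟩
    · exact ⟨hne.some, by simp [he]⟩
    · rw [hmemP] at hw
      have hwb := hb hw.1
      have hw2 : w + 2 ^ k ∈ Finset.univ.sup P' := by rw [hsup, Finset.mem_Icc]; omega
      obtain ⟨q, hq⟩ := (mem_supUniv _ _).mp hw2
      refine ⟨q, fun i hi => ?_⟩
      rw [hmemP] at hi
      have hib := hb hi.1
      obtain ⟨β, hβ1, hβ2⟩ := hcoh k (Nat.lt_succ_self k) i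
        (Finset.mem_Icc.mpr ⟨hib.1, hi.2⟩) w (Finset.mem_Icc.mpr ⟨hwb.1, hw.2⟩)
        ⟨p, hi.1, hw.1⟩
      rwa [block_uniq hdisj hβ2 hq] at hβ1
  choose g hgspec using hg
  refine ⟨P, g, ⟨⟨?_, hPsup⟩, ?_, ?_⟩, ?_⟩
  · intro p q hpq
    rw [Finset.disjoint_left]
    intro x hx hx'
    rw [hmemP] at hx hx'
    exact hpq (block_uniq hdisj hx.1 hx'.1)
  · intro p hp
    rw [hmemP]
    exact ⟨hone p hp, Nat.one_le_two_pow⟩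
  · intro k' hk' i hi j hj h
    obtain ⟨α, hiα, hjα⟩ := h
    rw [hmemP] at hiα hjα
    rw [Finset.mem_Icc] at hi hj
    have hpk : 2 ^ (k' + 1) ≤ 2 ^ k := Nat.pow_le_pow_right (by norm_num) hk'
    have hpk2 : 2 ^ (k' + 1) = 2 ^ k' + 2 ^ k' := by rw [pow_succ]; ring
    obtain ⟨β, hβ1, hβ2⟩ := hcoh k' (by omega) i (Finset.mem_Icc.mpr hi) j
      (Finset.mem_Icc.mpr hj) ⟨α, hiα.1, hjα.1⟩
    exact ⟨β, (hmemP _ _).mpr ⟨hβ1, by omega⟩, (hmemP _ _).mpr ⟨hβ2, by omega⟩⟩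
  · funext q
    ext x
    rw [mem_Rstep P g hPsup q x]
    constructor
    · intro hx
      have hxb := hb hx
      by_cases hle : x ≤ 2 ^ k
      · exact Or.inl ((hmemP _ _).mpr ⟨hx, hle⟩)
      · right
        refine ⟨x - 2 ^ k, ?_, by omega⟩
        rw [mem_dotAct]
        have hxm : x - 2 ^ k ∈ Finset.univ.sup P := by rw [hPsup, Finset.mem_Icc]; omega
        obtain ⟨p, hp⟩ := (mem_supUniv _ _).mp hxm
        have hgp := hgspec p _ hp
        have heq : (x - 2 ^ k) + 2 ^ k = x := by omega
        rw [heq] at hgp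
        exact ⟨p, block_uniq hdisj hgp hx, hp⟩
    · rintro (hx | ⟨i, hi, rfl⟩)
      · exact ((hmemP _ _).mp hx).1
      · rw [mem_dotAct] at hi
        obtain ⟨p, rfl, hp⟩ := hi
        exact hgspec p i hp

end mainlemmas

section llemmas

variable {n : ℕ}

lemma L_sound {k : ℕ} {L : Fin n → Finset ℕ} (f : Fin n → Fin n)
    (hL : IsLvalid k L) : IsLvalid (k + 1) (vUnion (dotAct L f) (vUp L)) := by
  obtain ⟨⟨hdisj, hsup⟩, htop, hcoh⟩ := hL
  have hM := mem_Lstep L f hsup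
  have hb : ∀ {p x}, x ∈ L p → 1 ≤ x ∧ x ≤ 2 ^ k := fun h => mem_bound hsup h
  have hdsup : Finset.univ.sup (dotAct L f) = Finset.Icc 1 (2 ^ k) :=
    (sup_dotAct L f).trans hsup
  have h2 : 2 ^ (k + 1) = 2 ^ k + 2 ^ k := by rw [pow_succ]; ring
  refine ⟨⟨?_, ?_⟩, ?_, ?_⟩
  · intro p q hpq
    rw [Finset.disjoint_left]
    intro x hx hx'
    rw [hM] at hx hx'
    rcases hx with h1 | ⟨i, hi, rfl⟩
    · rcases hx' with h1' | ⟨i, hi, hxeq⟩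
      · rw [mem_dotAct] at h1 h1'
        obtain ⟨a, rfl, ha⟩ := h1
        obtain ⟨a', ha'q, ha'⟩ := h1'
        exact hpq (by rw [← ha'q, block_uniq hdisj ha ha'])
      · have hb1 := mem_bound hdsup h1
        have hb2 := hb hi
        omega
    · rcases hx' with h1' | ⟨j, hj, hje⟩
      · have hb1 := mem_bound hdsup h1'
        have hb2 := hb hi
        omega
      · have hij : i = j := by omega
        subst hij
        exact hpq (block_uniq hdisj hi hj)
  · ext x
    rw [mem_supUniv, Finset.mem_Icc]
    simp only [hM]
    constructor
    · rintro ⟨q, h | ⟨i, hi, rfl⟩⟩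
      · have := mem_bound hdsup h; omega
      · have := hb hi; omega
    · intro hx
      by_cases hle : x ≤ 2 ^ k
      · have hxm : x ∈ Finset.univ.sup L := by rw [hsup, Finset.mem_Icc]; omega
        obtain ⟨p, hp⟩ := (mem_supUniv L x).mp hxm
        refine ⟨f p, Or.inl ?_⟩
        rw [mem_dotAct]; exact ⟨p, rfl, hp⟩
      · have hxm : x - 2 ^ k ∈ Finset.univ.sup L := by rw [hsup, Finset.mem_Icc]; omega
        obtain ⟨p, hp⟩ := (mem_supUniv _ _).mp hxm
        exact ⟨p, Or.inr ⟨x - 2 ^ k, hp, by omega⟩⟩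
  · intro p hp
    rw [hM]
    exact Or.inr ⟨2 ^ k, htop p hp, by omega⟩
  · intro k' hk' i hi j hj h
    obtain ⟨α, hiα, hjα⟩ := h
    rw [Finset.mem_Icc] at hi hj
    rw [hM] at hiα hjα
    have h1b : 1 ≤ 2 ^ k' := Nat.one_le_two_pow
    have hk'le : k' ≤ k := by omega
    have hpk : 2 ^ k' ≤ 2 ^ k := Nat.pow_le_pow_right (by norm_num) hk'le
    have hiL : 2 ^ k + 1 - i ∈ L α := by
      rcases hiα with hbot | ⟨z, hz, hze⟩
      · rw [mem_dotAct] at hbot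
        obtain ⟨a, -, ha⟩ := hbot
        have := hb ha; omega
      · have hzb := hb hz
        have hzeq : z = 2 ^ k + 1 - i := by omega
        rwa [hzeq] at hz
    have hjL : 2 ^ k + 1 - j ∈ L α := by
      rcases hjα with hbot | ⟨z, hz, hze⟩
      · rw [mem_dotAct] at hbot
        obtain ⟨a, -, ha⟩ := hbot
        have := hb ha; omega
      · have hzb := hb hz
        have hzeq : z = 2 ^ k + 1 - j := by omega
        rwa [hzeq] at hz
    rcases Nat.lt_or_ge k' k with hlt | hge
    · have hpk1 : 2 ^ (k' + 1) ≤ 2 ^ k := Nat.pow_le_pow_right (by norm_num) hlt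
      have hpk2 : 2 ^ (k' + 1) = 2 ^ k' + 2 ^ k' := by rw [pow_succ]; ring
      obtain ⟨β, hβ1, hβ2⟩ := hcoh k' hlt i (Finset.mem_Icc.mpr hi) j
        (Finset.mem_Icc.mpr hj) ⟨α, hiL, hjL⟩
      have hβ1b := hb hβ1
      have hβ2b := hb hβ2
      refine ⟨β, (hM β _).mpr (Or.inr ⟨2 ^ k + 1 - (i + 2 ^ k'), hβ1, by omega⟩),
        (hM β _).mpr (Or.inr ⟨2 ^ k + 1 - (j + 2 ^ k'), hβ2, by omega⟩)⟩
    · have hk'eq : k = k' := by omega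
      subst hk'eq
      have e1 : 2 ^ (k + 1) + 1 - (i + 2 ^ k) = 2 ^ k + 1 - i := by omega
      have e2 : 2 ^ (k + 1) + 1 - (j + 2 ^ k) = 2 ^ k + 1 - j := by omega
      refine ⟨f α, (hM _ _).mpr (Or.inl ?_), (hM _ _).mpr (Or.inl ?_)⟩
      · rw [e1, mem_dotAct]; exact ⟨α, rfl, hiL⟩
      · rw [e2, mem_dotAct]; exact ⟨α, rfl, hjL⟩

lemma L_complete {k : ℕ} (hn : 1 ≤ n) {L' : Fin n → Finset ℕ}
    (hL' : IsLvalid (k + 1) L') :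
    ∃ L f, IsLvalid k L ∧ L' = vUnion (dotAct L f) (vUp L) := by
  obtain ⟨⟨hdisj, hsup⟩, htop, hcoh⟩ := hL'
  have hne : Nonempty (Fin n) := ⟨⟨0, hn⟩⟩
  have h2 : 2 ^ (k + 1) = 2 ^ k + 2 ^ k := by rw [pow_succ]; ring
  have hb : ∀ {p x}, x ∈ L' p → 1 ≤ x ∧ x ≤ 2 ^ (k + 1) := fun h => mem_bound hsup h
  set L : Fin n → Finset ℕ := fun q => ((L' q).filter (2 ^ k < ·)).image (· - 2 ^ k)
    with hLdef
  have hmemL : ∀ q x, x ∈ L q ↔ 1 ≤ x ∧ x + 2 ^ k ∈ L' q := by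
    intro q x
    simp only [hLdef, Finset.mem_image, Finset.mem_filter]
    constructor
    · rintro ⟨a, ⟨ha, hagt⟩, rfl⟩
      have := hb ha
      refine ⟨by omega, ?_⟩
      have heq : a - 2 ^ k + 2 ^ k = a := by omega
      rw [heq]; exact ha
    · rintro ⟨hx1, hx⟩
      exact ⟨x + 2 ^ k, ⟨hx, by omega⟩, by omega⟩
  have hLsup : Finset.univ.sup L = Finset.Icc 1 (2 ^ k) := by
    ext x
    rw [mem_supUniv, Finset.mem_Icc]
    constructor
    · rintro ⟨p, hp⟩
      rw [hmemL] at hp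
      have := hb hp.2; omega
    · intro hx
      have hxm : x + 2 ^ k ∈ Finset.univ.sup L' := by rw [hsup, Finset.mem_Icc]; omega
      obtain ⟨p, hp⟩ := (mem_supUniv _ _).mp hxm
      exact ⟨p, (hmemL _ _).mpr ⟨hx.1, hp⟩⟩
  have hf : ∀ p : Fin n, ∃ q : Fin n, ∀ z ∈ L p, z ∈ L' q := by
    intro p
    rcases (L p).eq_empty_or_nonempty with he | ⟨w, hw⟩
    · exact ⟨hne.some, by simp [he]⟩
    · have hw' := (hmemL _ _).mp hw
      have hwb := hb hw'.2
      have hwm : w ∈ Finset.univ.sup L' := by rw [hsup, Finset.mem_Icc]; omega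
      obtain ⟨q, hq⟩ := (mem_supUniv _ _).mp hwm
      refine ⟨q, fun z hz => ?_⟩
      have hz' := (hmemL _ _).mp hz
      have hzb := hb hz'.2
      have hm1 : 2 ^ (k + 1) + 1 - (2 ^ k + 1 - z) ∈ L' p := by
        have e : 2 ^ (k + 1) + 1 - (2 ^ k + 1 - z) = z + 2 ^ k := by omega
        rw [e]; exact hz'.2
      have hm2 : 2 ^ (k + 1) + 1 - (2 ^ k + 1 - w) ∈ L' p := by
        have e : 2 ^ (k + 1) + 1 - (2 ^ k + 1 - w) = w + 2 ^ k := by omega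
        rw [e]; exact hw'.2
      obtain ⟨β, hβ1, hβ2⟩ := hcoh k (Nat.lt_succ_self k)
        (2 ^ k + 1 - z) (Finset.mem_Icc.mpr ⟨by omega, by omega⟩)
        (2 ^ k + 1 - w) (Finset.mem_Icc.mpr ⟨by omega, by omega⟩)
        ⟨p, hm1, hm2⟩
      have e1 : 2 ^ (k + 1) + 1 - (2 ^ k + 1 - z + 2 ^ k) = z := by omega
      have e2 : 2 ^ (k + 1) + 1 - (2 ^ k + 1 - w + 2 ^ k) = w := by omega
      rw [e1] at hβ1; rw [e2] at hβ2
      rwa [block_uniq hdisj hβ2 hq] at hβ1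
  choose f hfspec using hf
  refine ⟨L, f, ⟨⟨?_, hLsup⟩, ?_, ?_⟩, ?_⟩
  · intro p q hpq
    rw [Finset.disjoint_left]
    intro x hx hx'
    rw [hmemL] at hx hx'
    exact hpq (block_uniq hdisj hx.2 hx'.2)
  · intro p hp
    rw [hmemL]
    exact ⟨Nat.one_le_two_pow, by rw [← h2]; exact htop p hp⟩
  · intro k' hk' i hi j hj h
    obtain ⟨α, hiα, hjα⟩ := h
    rw [hmemL] at hiα hjα
    rw [Finset.mem_Icc] at hi hj
    have h1b : 1 ≤ 2 ^ k' := Nat.one_le_two_pow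
    have hpk1 : 2 ^ (k' + 1) ≤ 2 ^ k := Nat.pow_le_pow_right (by norm_num) hk'
    have hpk2 : 2 ^ (k' + 1) = 2 ^ k' + 2 ^ k' := by rw [pow_succ]; ring
    have ei : 2 ^ k + 1 - i + 2 ^ k = 2 ^ (k + 1) + 1 - i := by omega
    have ej : 2 ^ k + 1 - j + 2 ^ k = 2 ^ (k + 1) + 1 - j := by omega
    rw [ei] at hiα; rw [ej] at hjα
    obtain ⟨β, hβ1, hβ2⟩ := hcoh k' (by omega) i (Finset.mem_Icc.mpr hi) j
      (Finset.mem_Icc.mpr hj) ⟨α, hiα.2, hjα.2⟩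
    refine ⟨β, (hmemL _ _).mpr ⟨by omega, ?_⟩, (hmemL _ _).mpr ⟨by omega, ?_⟩⟩
    · have e : 2 ^ k + 1 - (i + 2 ^ k') + 2 ^ k = 2 ^ (k + 1) + 1 - (i + 2 ^ k') := by
        omega
      rw [e]; exact hβ1
    · have e : 2 ^ k + 1 - (j + 2 ^ k') + 2 ^ k = 2 ^ (k + 1) + 1 - (j + 2 ^ k') := by
        omega
      rw [e]; exact hβ2
  · funext q
    ext x
    rw [mem_Lstep L f hLsup q x]
    constructor
    · intro hx
      have hxb := hb hx
      by_cases hle : x ≤ 2 ^ k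
      · left
        have hxm : x ∈ Finset.univ.sup L := by rw [hLsup, Finset.mem_Icc]; omega
        obtain ⟨p, hp⟩ := (mem_supUniv _ _).mp hxm
        have hfp := hfspec p x hp
        rw [mem_dotAct]
        exact ⟨p, block_uniq hdisj hfp hx, hp⟩
      · right
        refine ⟨x - 2 ^ k, (hmemL _ _).mpr ⟨by omega, ?_⟩, by omega⟩
        have heq : x - 2 ^ k + 2 ^ k = x := by omega
        rw [heq]; exact hx
    · rintro (hx | ⟨i, hi, rfl⟩)
      · rw [mem_dotAct] at hx
        obtain ⟨p, rfl, hp⟩ := hx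
        exact hfspec p x hp
      · exact ((hmemL _ _).mp hi).2

end llemmas

section basecase

variable {n : ℕ}

lemma exp_zero (hn : 1 ≤ n) (P : Fin n → Finset ℕ)
    (hE : IsEXP 0 P) (h1 : ∀ p : Fin n, p.val = 0 → 1 ∈ P p) :
    P = fun q => if q.val = 0 then {1} else ∅ := by
  obtain ⟨hdisj, hsup⟩ := hE
  have hp0 : (2:ℕ) ^ 0 = 1 := pow_zero 2
  have hsub : ∀ q x, x ∈ P q → x = 1 := by
    intro q x hx
    have := mem_bound hsup hx
    omega
  funext q
  by_cases hq : q.val = 0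
  · rw [if_pos hq]
    apply Finset.eq_singleton_iff_unique_mem.mpr
    exact ⟨h1 q hq, fun x hx => hsub q x hx⟩
  · rw [if_neg hq]
    rw [Finset.eq_empty_iff_forall_notMem]
    intro x hx
    have hx1 := hsub q x hx
    subst hx1
    have h1' := h1 ⟨0, hn⟩ rfl
    have hne : q ≠ (⟨0, hn⟩ : Fin n) := by
      intro h; apply hq; rw [h]
    exact Finset.disjoint_left.mp (hdisj q _ hne) hx h1'

lemma canon_exp (hn : 1 ≤ n) :
    IsEXP 0 (fun q : Fin n => if q.val = 0 then ({1} : Finset ℕ) else ∅) := by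
  constructor
  · intro p q hpq
    by_cases hp : p.val = 0 <;> by_cases hq : q.val = 0 <;> simp only [hp, hq, if_pos, if_neg,
      if_true, if_false] <;> simp_all
    exact absurd (Fin.ext (hp.trans hq.symm)) hpq
  · ext x
    rw [mem_supUniv]
    simp only [pow_zero, Finset.Icc_self, Finset.mem_singleton]
    constructor
    · rintro ⟨p, hp⟩
      by_cases h : p.val = 0
      · rw [if_pos h, Finset.mem_singleton] at hp; exact hp
      · rw [if_neg h] at hp; exact absurd hp (Finset.notMem_empty x)
    · rintro rfl
      exact ⟨⟨0, hn⟩, by rw [if_pos rfl]; exact Finset.mem_singleton_self 1⟩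

lemma canon_Rvalid (hn : 1 ≤ n) :
    IsRvalid 0 (fun q : Fin n => if q.val = 0 then ({1} : Finset ℕ) else ∅) := by
  refine ⟨canon_exp hn, ?_, ?_⟩
  · intro p hp; simp [hp]
  · intro k' hk'; exact absurd hk' (Nat.not_lt_zero k')

lemma canon_Lvalid (hn : 1 ≤ n) :
    IsLvalid 0 (fun q : Fin n => if q.val = 0 then ({1} : Finset ℕ) else ∅) := by
  refine ⟨canon_exp hn, ?_, ?_⟩
  · intro p hp; simp [hp]
  · intro k' hk'; exact absurd hk' (Nat.not_lt_zero k')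

end basecase

theorem stmt4 (m n k : ℕ) (hm : 1 ≤ m) (hn : 1 ≤ n) :
    Uset m n k = {x : (Fin m → Finset ℕ) × (Fin n → Finset ℕ) |
      IsLvalid k x.1 ∧ IsRvalid k x.2} := by
  induction k with
  | zero =>
    ext x
    simp only [Uset, Set.mem_setOf_eq]
    constructor
    · rintro rfl
      exact ⟨canon_Lvalid hm, canon_Rvalid hn⟩
    · rintro ⟨hL, hR⟩
      have h1 : x.1 = fun p : Fin m => if p.val = 0 then ({1} : Finset ℕ) else ∅ :=
        exp_zero hm x.1 hL.1 (by
          intro p hp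
          have := hL.2.1 p hp
          rwa [pow_zero] at this)
      have h2 : x.2 = fun q : Fin n => if q.val = 0 then ({1} : Finset ℕ) else ∅ :=
        exp_zero hn x.2 hR.1 hR.2.1
      exact Prod.ext h1 h2
  | succ k ih =>
    ext x
    simp only [Uset, Set.mem_setOf_eq]
    constructor
    · rintro ⟨L, P, hLP, f, g, rfl⟩
      rw [ih] at hLP
      simp only [Set.mem_setOf_eq] at hLP
      exact ⟨L_sound f hLP.1, R_sound g hLP.2⟩
    · rintro ⟨hL, hR⟩
      obtain ⟨L, f, hLv, hLeq⟩ := L_complete hm hL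
      obtain ⟨P, g, hPv, hPeq⟩ := R_complete hn hR
      refine ⟨L, P, ?_, f, g, ?_⟩
      · rw [ih]; exact ⟨hLv, hPv⟩
      · rw [← hLeq, ← hPeq]
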